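/- Let g : ℝ^d → ℝ^d be bounded and Lipschitz continuous with Lipschitz constant L < 1. For ε ∈ (0,1], define Φ_ε : C([0,∞), ℝ^d) → C([0,∞), ℝ^d) by (Φ_ε ω)(t) = ω(t) + ε g(ω(t)/ε). Let (μ_ε)_{ε∈(0,1]} be a family of Borel probability measures on C([0,∞), ℝ^d). Then the family {μ_ε : ε ∈ (0,1]} is tight if and only if the family of pushforward measures {(Φ_ε)_* μ_ε : ε ∈ (0,1]} is tight. -/

import Mathlib

open MeasureTheory Set
open scoped NNReal ENNReal

noncomputable section

/-- The path space `C([0,∞), ℝ^d)` with the topology of uniform convergence on compacts. -/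
abbrev PathSpace (d : ℕ) := C(ℝ≥0, EuclideanSpace ℝ (Fin d))

instance pathSpaceMeasurableSpace (d : ℕ) : MeasurableSpace (PathSpace d) := borel _

instance pathSpaceBorelSpace (d : ℕ) : BorelSpace (PathSpace d) := ⟨rfl⟩

/-- A compact family in path space is equicontinuous. -/
lemma equicontinuous_of_isCompact {d : ℕ} {K : Set (PathSpace d)} (hK : IsCompact K) :
    Equicontinuous ((↑) : K → ℝ≥0 → EuclideanSpace ℝ (Fin d)) := by
  intro x
  rw [Metric.equicontinuousAt_iff]
  intro ε hε
  set Q : Set ℝ≥0 := Icc 0 (x + 1) with hQdef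
  have hQ : IsCompact Q := isCompact_Icc
  haveI : CompactSpace Q := isCompact_iff_compactSpace.mp hQ
  set r : PathSpace d → C(Q, EuclideanSpace ℝ (Fin d)) := fun f => f.restrict Q with hr
  have hrc : Continuous r := ContinuousMap.continuous_restrict Q
  have hKQ : IsCompact ((r '' K) ×ˢ (univ : Set Q)) := (hK.image hrc).prod isCompact_univ
  have heval : Continuous fun p : C(Q, EuclideanSpace ℝ (Fin d)) × Q => p.1 p.2 :=
    ContinuousEval.continuous_eval
  have huc := hKQ.uniformContinuousOn_of_continuous heval.continuousOn
  rw [Metric.uniformContinuousOn_iff] at huc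
  obtain ⟨δ, hδ, hucd⟩ := huc ε hε
  refine ⟨min δ 1, by positivity, fun y hy f => ?_⟩
  have hxQ : x ∈ Q := ⟨zero_le, le_add_of_nonneg_right zero_le_one⟩
  have hyQ : y ∈ Q := by
    refine ⟨zero_le, ?_⟩
    have h1 := hy.trans_le (min_le_right δ 1)
    rw [NNReal.dist_eq] at h1
    have h2 := abs_lt.mp h1
    have h3 : (y : ℝ) ≤ (x : ℝ) + 1 := by linarith [h2.2]
    exact_mod_cast h3
  have h1 : (r f, (⟨x, hxQ⟩ : Q)) ∈ (r '' K) ×ˢ (univ : Set Q) :=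
    ⟨mem_image_of_mem r f.2, mem_univ _⟩
  have h2 : (r f, (⟨y, hyQ⟩ : Q)) ∈ (r '' K) ×ˢ (univ : Set Q) :=
    ⟨mem_image_of_mem r f.2, mem_univ _⟩
  have hd : dist ((r f, (⟨x, hxQ⟩ : Q))) ((r f, (⟨y, hyQ⟩ : Q))) < δ := by
    rw [Prod.dist_eq]
    simp only [dist_self]
    rw [Subtype.dist_eq, dist_comm]
    exact max_lt hδ (hy.trans_le (min_le_left δ 1))
  have := hucd _ h1 _ h2 hd
  simpa only [r, ContinuousMap.restrict_apply] using this

/-- The "hull" of a compact family: paths dominated by members of the family, with a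
scaled modulus of continuity and a shifted pointwise bound.  Its closure is compact, by
the Arzelà–Ascoli theorem. -/
lemma isCompact_closure_hull (d : ℕ) (K : Set (PathSpace d)) (hK : IsCompact K)
    (a b : ℝ) (ha : 0 ≤ a) :
    IsCompact (closure {ψ : PathSpace d | ∃ ω ∈ K,
      (∀ s t : ℝ≥0, dist (ψ s) (ψ t) ≤ a * dist (ω s) (ω t)) ∧
      ∀ t : ℝ≥0, ‖ψ t‖ ≤ ‖ω t‖ + b}) := by
  set E := EuclideanSpace ℝ (Fin d)
  set T : Set (PathSpace d) := {ψ : PathSpace d | ∃ ω ∈ K,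
      (∀ s t : ℝ≥0, dist (ψ s) (ψ t) ≤ a * dist (ω s) (ω t)) ∧
      ∀ t : ℝ≥0, ‖ψ t‖ ≤ ‖ω t‖ + b} with hT
  have hcov : ⋃₀ {Q : Set ℝ≥0 | IsCompact Q} = univ :=
    eq_univ_iff_forall.mpr fun x => mem_sUnion_of_mem (mem_singleton x) isCompact_singleton
  haveI : T2Space (UniformOnFun ℝ≥0 E {Q : Set ℝ≥0 | IsCompact Q}) :=
    UniformOnFun.t2Space_of_covering hcov
  have hue := ContinuousMap.isUniformEmbedding_toUniformOnFunIsCompact (α := ℝ≥0) (β := E)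
  have hclemb : Topology.IsClosedEmbedding
      ((UniformOnFun.ofFun {Q : Set ℝ≥0 | IsCompact Q}) ∘ (fun f : PathSpace d => ⇑f)) := by
    refine ⟨hue.isEmbedding, ?_⟩
    exact (hue.isUniformInducing.isComplete_range).isClosed
  have heqT : Equicontinuous ((↑) : T → ℝ≥0 → E) := by
    intro x
    rw [Metric.equicontinuousAt_iff]
    intro ε hε
    have hKeq := equicontinuous_of_isCompact hK x
    rw [Metric.equicontinuousAt_iff] at hKeq
    obtain ⟨δ, hδ, hKd⟩ := hKeq (ε / (a + 1)) (by positivity)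
    refine ⟨δ, hδ, fun y hy ψ => ?_⟩
    obtain ⟨ω, hωK, hlip, -⟩ := ψ.2
    calc dist ((ψ : PathSpace d) x) ((ψ : PathSpace d) y) ≤ a * dist (ω x) (ω y) := hlip x y
      _ ≤ a * (ε / (a + 1)) := by
          have := hKd y hy ⟨ω, hωK⟩
          exact mul_le_mul_of_nonneg_left this.le ha
      _ < ε := by rw [mul_div_assoc']; rw [div_lt_iff₀ (by positivity)]; nlinarith
  refine ArzelaAscoli.isCompact_closure_of_isClosedEmbedding
    (F := fun f : PathSpace d => ⇑f) (fun Q hQ => hQ) hclemb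
    (fun Q _ => (heqT.equicontinuousOn Q)) ?_
  intro Q hQ x hx
  have hKx : IsCompact ((fun f : PathSpace d => f x) '' K) :=
    hK.image (continuous_eval_const x)
  obtain ⟨R, hR⟩ := hKx.isBounded.subset_closedBall (0 : E)
  refine ⟨Metric.closedBall (0 : E) (R + b), isCompact_closedBall _ _, ?_⟩
  intro ψ hψ
  obtain ⟨ω, hωK, -, hbd⟩ := hψ
  have h1 : ‖ω x‖ ≤ R := by
    have := hR (mem_image_of_mem _ hωK)
    simpa [Metric.mem_closedBall, dist_zero_right] using this
  have h2 := hbd x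
  simp only [Metric.mem_closedBall, dist_zero_right]
  linarith

/-- Let `g` be bounded and Lipschitz with constant `L < 1`, and let
`Φ_ε ω (t) = ω(t) + ε g(ω(t)/ε)`. A family `(μ_ε)_{ε ∈ (0,1]}` of Borel probability measures
on path space is tight if and only if the family of pushforwards `((Φ_ε)_* μ_ε)_{ε ∈ (0,1]}`
is tight. -/
theorem tight_iff_corrected_tight (d : ℕ)
    (g : EuclideanSpace ℝ (Fin d) → EuclideanSpace ℝ (Fin d))
    (M : ℝ) (hgbdd : ∀ x, ‖g x‖ ≤ M) (L : ℝ≥0) (hL : (L : ℝ) < 1) (hgLip : LipschitzWith L g)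
    (Φ : ℝ → PathSpace d → PathSpace d)
    (hΦ : ∀ ε ∈ Set.Ioc (0 : ℝ) 1, ∀ (ω : PathSpace d) (t : ℝ≥0),
      Φ ε ω t = ω t + ε • g (ε⁻¹ • ω t))
    (μ : ℝ → Measure (PathSpace d)) (hμ : ∀ ε ∈ Set.Ioc (0 : ℝ) 1, IsProbabilityMeasure (μ ε)) :
    (∀ δ : ℝ≥0∞, 0 < δ → ∃ K : Set (PathSpace d), IsCompact K ∧
        ∀ ε ∈ Set.Ioc (0 : ℝ) 1, μ ε Kᶜ ≤ δ) ↔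
      (∀ δ : ℝ≥0∞, 0 < δ → ∃ K : Set (PathSpace d), IsCompact K ∧
        ∀ ε ∈ Set.Ioc (0 : ℝ) 1, (μ ε).map (Φ ε) Kᶜ ≤ δ) := by
  have hM : 0 ≤ M := (norm_nonneg _).trans (hgbdd 0)
  have hL0 : (0:ℝ) ≤ L := L.coe_nonneg
  have hgc : Continuous g := hgLip.continuous
  -- each Φ_ε is continuous
  have hΦcont : ∀ ε ∈ Set.Ioc (0:ℝ) 1, Continuous (Φ ε) := by
    intro ε hε
    have : Φ ε = fun ω : PathSpace d => ω +
        (ContinuousMap.mk (fun x => ε • g (ε⁻¹ • x))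
          ((hgc.comp (continuous_const_smul ε⁻¹)).const_smul ε)).comp ω := by
      funext ω
      ext t
      rw [hΦ ε hε ω t]
      simp
    rw [this]
    exact continuous_id.add (ContinuousMap.continuous_postcomp _)
  -- uniform bound on the correction term
  have hcorr : ∀ ε ∈ Set.Ioc (0:ℝ) 1, ∀ x : EuclideanSpace ℝ (Fin d),
      ‖ε • g (ε⁻¹ • x)‖ ≤ M := by
    intro ε hε x
    rw [norm_smul, Real.norm_eq_abs, abs_of_pos hε.1]
    nlinarith [hgbdd (ε⁻¹ • x), norm_nonneg (g (ε⁻¹ • x)), hε.1, hε.2]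
  -- Lipschitz bound on the correction difference
  have hdiff : ∀ ε ∈ Set.Ioc (0:ℝ) 1, ∀ u v : EuclideanSpace ℝ (Fin d),
      ‖ε • (g (ε⁻¹ • u) - g (ε⁻¹ • v))‖ ≤ (L:ℝ) * ‖u - v‖ := by
    intro ε hε u v
    rw [norm_smul, Real.norm_eq_abs, abs_of_pos hε.1]
    have h3 := hgLip.dist_le_mul (ε⁻¹ • u) (ε⁻¹ • v)
    rw [dist_eq_norm, dist_eq_norm, ← smul_sub, norm_smul, Real.norm_eq_abs,
      abs_of_pos (inv_pos.mpr hε.1)] at h3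
    calc ε * ‖g (ε⁻¹ • u) - g (ε⁻¹ • v)‖ ≤ ε * ((L:ℝ) * (ε⁻¹ * ‖u - v‖)) :=
          mul_le_mul_of_nonneg_left h3 hε.1.le
      _ = (L:ℝ) * ‖u - v‖ := by
          field_simp
          rw [mul_assoc]; exact mul_div_cancel_left₀ _ (ne_of_gt hε.1)
  constructor
  · -- tightness of μ implies tightness of the pushforwards
    intro h δ hδ
    obtain ⟨K, hKc, hKb⟩ := h δ hδ
    have hK' := isCompact_closure_hull d K hKc (1 + (L:ℝ)) M (by positivity)
    refine ⟨closure {ψ : PathSpace d | ∃ ω ∈ K,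
      (∀ s t : ℝ≥0, dist (ψ s) (ψ t) ≤ (1 + (L:ℝ)) * dist (ω s) (ω t)) ∧
      ∀ t : ℝ≥0, ‖ψ t‖ ≤ ‖ω t‖ + M}, hK', ?_⟩
    intro ε hε
    rw [Measure.map_apply (hΦcont ε hε).measurable hK'.isClosed.measurableSet.compl]
    refine le_trans (measure_mono ?_) (hKb ε hε)
    rw [preimage_compl, compl_subset_compl]
    intro ω hω
    apply subset_closure
    refine ⟨ω, hω, fun s t => ?_, fun t => ?_⟩
    · rw [dist_eq_norm, dist_eq_norm, hΦ ε hε ω s, hΦ ε hε ω t]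
      have heq : (ω s + ε • g (ε⁻¹ • ω s)) - (ω t + ε • g (ε⁻¹ • ω t))
          = (ω s - ω t) + ε • (g (ε⁻¹ • ω s) - g (ε⁻¹ • ω t)) := by
        rw [smul_sub]; abel
      rw [heq]
      have h2 := hdiff ε hε (ω s) (ω t)
      calc ‖(ω s - ω t) + ε • (g (ε⁻¹ • ω s) - g (ε⁻¹ • ω t))‖
          ≤ ‖ω s - ω t‖ + ‖ε • (g (ε⁻¹ • ω s) - g (ε⁻¹ • ω t))‖ := norm_add_le _ _
        _ ≤ ‖ω s - ω t‖ + (L:ℝ) * ‖ω s - ω t‖ := by linarith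
        _ = (1 + (L:ℝ)) * ‖ω s - ω t‖ := by ring
    · rw [hΦ ε hε ω t]
      have h1 := hcorr ε hε (ω t)
      calc ‖ω t + ε • g (ε⁻¹ • ω t)‖ ≤ ‖ω t‖ + ‖ε • g (ε⁻¹ • ω t)‖ := norm_add_le _ _
        _ ≤ ‖ω t‖ + M := by linarith
  · -- tightness of the pushforwards implies tightness of μ
    intro h δ hδ
    obtain ⟨K, hKc, hKb⟩ := h δ hδ
    have h1L : 0 < 1 - (L:ℝ) := by linarith
    have hK' := isCompact_closure_hull d K hKc (1 - (L:ℝ))⁻¹ M (inv_nonneg.mpr h1L.le)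
    refine ⟨closure {ψ : PathSpace d | ∃ ω ∈ K,
      (∀ s t : ℝ≥0, dist (ψ s) (ψ t) ≤ (1 - (L:ℝ))⁻¹ * dist (ω s) (ω t)) ∧
      ∀ t : ℝ≥0, ‖ψ t‖ ≤ ‖ω t‖ + M}, hK', ?_⟩
    intro ε hε
    have hmap := hKb ε hε
    rw [Measure.map_apply (hΦcont ε hε).measurable hKc.isClosed.measurableSet.compl] at hmap
    refine le_trans (measure_mono ?_) hmap
    rw [preimage_compl, compl_subset_compl]
    intro ψ hψ
    apply subset_closure
    refine ⟨Φ ε ψ, hψ, fun s t => ?_, fun t => ?_⟩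
    · rw [dist_eq_norm, dist_eq_norm, inv_mul_eq_div, le_div_iff₀ h1L]
      have heq : Φ ε ψ s - Φ ε ψ t
          = (ψ s - ψ t) + ε • (g (ε⁻¹ • ψ s) - g (ε⁻¹ • ψ t)) := by
        rw [hΦ ε hε ψ s, hΦ ε hε ψ t, smul_sub]; abel
      have h2 := hdiff ε hε (ψ s) (ψ t)
      have h4 : ‖ψ s - ψ t‖ ≤ ‖Φ ε ψ s - Φ ε ψ t‖ + ‖ε • (g (ε⁻¹ • ψ s) - g (ε⁻¹ • ψ t))‖ := by
        have h5 : ψ s - ψ t = (Φ ε ψ s - Φ ε ψ t) - ε • (g (ε⁻¹ • ψ s) - g (ε⁻¹ • ψ t)) := by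
          rw [heq]; abel
        rw [h5]
        exact norm_sub_le _ _
      nlinarith [norm_nonneg (ψ s - ψ t)]
    · have h1 := hcorr ε hε (ψ t)
      have h5 : ψ t = Φ ε ψ t - ε • g (ε⁻¹ • ψ t) := by
        rw [hΦ ε hε ψ t]; abel
      calc ‖ψ t‖ = ‖Φ ε ψ t - ε • g (ε⁻¹ • ψ t)‖ := by rw [← h5]
        _ ≤ ‖Φ ε ψ t‖ + ‖ε • g (ε⁻¹ • ψ t)‖ := norm_sub_le _ _
        _ ≤ ‖Φ ε ψ t‖ + M := by linarith

end
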